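/- A G-graded commutative ring R is a Gelfand graded ring if and only if for any two disjoint Zariski closed subsets F, F' of GSpec(R) there exists r ∈ R such that the image of r in the localization R_P is 0 for all P ∈ F and is 1 for all P ∈ F' (equivalently: for each P ∈ F there is a ∈ h(R)\P with ra = 0, and for each P ∈ F' there is b ∈ h(R)\P with (r−1)b = 0). -/

import Mathlib

section GradedGelfand

variable {G : Type*} [AddGroup G] [DecidableEq G] {R : Type*} [CommRing R]
variable (𝒜 : G → AddSubgroup R) [GradedRing 𝒜]

/-- A homogeneous (graded) prime ideal: a proper graded ideal that is prime
with respect to homogeneous elements. -/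
def IsGradedPrime (P : Ideal R) : Prop :=
  P.IsHomogeneous 𝒜 ∧ P ≠ ⊤ ∧
    ∀ a b : R, SetLike.IsHomogeneousElem 𝒜 a → SetLike.IsHomogeneousElem 𝒜 b →
      a * b ∈ P → a ∈ P ∨ b ∈ P

/-- A graded maximal ideal: a proper graded ideal maximal among proper graded ideals. -/
def IsGradedMaximal (M : Ideal R) : Prop :=
  M.IsHomogeneous 𝒜 ∧ M ≠ ⊤ ∧
    ∀ J : Ideal R, J.IsHomogeneous 𝒜 → M ≤ J → J ≠ ⊤ → J = M

/-- The homogeneous prime spectrum of a graded ring. -/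
def GSpec := { P : Ideal R // IsGradedPrime 𝒜 P }

/-- The Zariski topology on the homogeneous prime spectrum, generated by the basic
open sets `D_G(r)` for homogeneous `r`; the closed sets are exactly the `V_G(I)`
for graded ideals `I`. -/
instance : TopologicalSpace (GSpec 𝒜) :=
  TopologicalSpace.generateFrom
    { U | ∃ r : R, SetLike.IsHomogeneousElem 𝒜 r ∧ U = { P : GSpec 𝒜 | r ∉ P.1 } }

/-- The set of graded maximal ideals inside the homogeneous prime spectrum. -/
def GMax : Set (GSpec 𝒜) := { P | IsGradedMaximal 𝒜 P.1 }

/-- A Gelfand graded ring: every homogeneous prime ideal is contained in a unique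
graded maximal ideal. -/
def IsGelfandGraded : Prop :=
  ∀ P : Ideal R, IsGradedPrime 𝒜 P →
    ∃! M : Ideal R, IsGradedMaximal 𝒜 M ∧ P ≤ M

/-- A pm⁺ graded ring: for every homogeneous prime `P`, the homogeneous primes
containing `P` form a chain. -/
def IsPMPlusGraded : Prop :=
  ∀ P Q Q' : Ideal R, IsGradedPrime 𝒜 P → IsGradedPrime 𝒜 Q → IsGradedPrime 𝒜 Q' →
    P ≤ Q → P ≤ Q' → Q ≤ Q' ∨ Q' ≤ Q

end GradedGelfand

section Aux

variable {G : Type*} [AddGroup G] [DecidableEq G] {R : Type*} [CommRing R]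
variable (𝒜 : G → AddSubgroup R) [GradedRing 𝒜]

/-- If all homogeneous elements of a graded ideal M lie in Q, then M ≤ Q. -/
theorem le_of_homog_le {M Q : Ideal R} (hM : M.IsHomogeneous 𝒜)
    (h : ∀ x : R, SetLike.IsHomogeneousElem 𝒜 x → x ∈ M → x ∈ Q) : M ≤ Q := by
  intro m hm
  classical
  rw [← DirectSum.sum_support_decompose 𝒜 m]
  exact Ideal.sum_mem _ fun i _ => h _ ⟨i, (DirectSum.decompose 𝒜 m i).2⟩ (hM i hm)

/-- Zorn: a graded ideal disjoint from a homogeneous multiplicative set is contained in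
a graded prime which is maximal among graded ideals disjoint from the set. -/
theorem exists_gradedPrime (S : Set R) (hS1 : (1 : R) ∈ S)
    (hSmul : ∀ s ∈ S, ∀ t ∈ S, s * t ∈ S) (I : Ideal R) (hI : I.IsHomogeneous 𝒜)
    (hIS : ∀ s ∈ S, s ∉ I) :
    ∃ P : Ideal R, IsGradedPrime 𝒜 P ∧ I ≤ P ∧ (∀ s ∈ S, s ∉ P) ∧
      ∀ J : Ideal R, J.IsHomogeneous 𝒜 → P ≤ J → (∀ s ∈ S, s ∉ J) → J = P := by
  set 𝒮 : Set (Ideal R) := { J | J.IsHomogeneous 𝒜 ∧ ∀ s ∈ S, s ∉ J } with h𝒮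
  obtain ⟨P, hIP, hPmem, hPmax⟩ := zorn_le_nonempty₀ 𝒮 (fun c hc hchain y hy => by
      refine ⟨sSup c, ⟨Ideal.IsHomogeneous.sSup fun J hJ => (hc hJ).1, ?_⟩, fun z hz => le_sSup hz⟩
      intro s hs hmem
      obtain ⟨J, hJc, hsJ⟩ := (Submodule.mem_sSup_of_directed ⟨y, hy⟩ hchain.directedOn).1 hmem
      exact (hc hJc).2 s hs hsJ) I ⟨hI, hIS⟩
  have hPhom : P.IsHomogeneous 𝒜 := hPmem.1
  have hPS : ∀ s ∈ S, s ∉ P := hPmem.2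
  have hmax : ∀ J : Ideal R, J.IsHomogeneous 𝒜 → P ≤ J → (∀ s ∈ S, s ∉ J) → J = P :=
    fun J hJ hPJ hJS => le_antisymm (hPmax ⟨hJ, hJS⟩ hPJ) hPJ
  have hPne : P ≠ ⊤ := fun h => hPS 1 hS1 (h ▸ Submodule.mem_top)
  refine ⟨P, ⟨hPhom, hPne, ?_⟩, hIP, hPS, hmax⟩
  intro a b ha hb hab
  by_contra hcon
  push_neg at hcon
  obtain ⟨haP, hbP⟩ := hcon
  have key : ∀ x : R, SetLike.IsHomogeneousElem 𝒜 x → x ∉ P →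
      ∃ s ∈ S, ∃ p ∈ P, ∃ r : R, p + r * x = s := by
    intro x hx hxP
    have hJ : (P ⊔ Ideal.span {x}).IsHomogeneous 𝒜 :=
      hPhom.sup (Ideal.homogeneous_span 𝒜 _ (by rintro y (rfl : y = x); exact hx))
    by_cases hmeet : ∀ s ∈ S, s ∉ P ⊔ Ideal.span {x}
    · have := hmax _ hJ le_sup_left hmeet
      exact absurd (this ▸ Ideal.mem_sup_right (Ideal.subset_span rfl)) hxP
    · push_neg at hmeet
      obtain ⟨s, hsS, hsJ⟩ := hmeet
      obtain ⟨p, hp, q, hq, hpq⟩ := Submodule.mem_sup.1 hsJ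
      obtain ⟨r, hr⟩ := Ideal.mem_span_singleton'.1 hq
      exact ⟨s, hsS, p, hp, r, by rw [hr, hpq]⟩
  obtain ⟨s₁, hs₁S, p₁, hp₁, r₁, hr₁⟩ := key a ha haP
  obtain ⟨s₂, hs₂S, p₂, hp₂, r₂, hr₂⟩ := key b hb hbP
  have : s₁ * s₂ ∈ P := by
    rw [← hr₁, ← hr₂]
    have : (p₁ + r₁ * a) * (p₂ + r₂ * b)
        = p₁ * (p₂ + r₂ * b) + (r₁ * p₂) * a + (r₁ * r₂) * (a * b) := by ring
    rw [this]
    exact P.add_mem (P.add_mem (P.mul_mem_right _ hp₁) (P.mul_mem_right _ (P.mul_mem_left _ hp₂)))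
      (P.mul_mem_left _ hab)
  exact hPS _ (hSmul _ hs₁S _ hs₂S) this

/-- Every proper graded ideal is contained in a graded maximal ideal, which is graded prime. -/
theorem exists_gradedMaximal (I : Ideal R) (hI : I.IsHomogeneous 𝒜) (hne : I ≠ ⊤) :
    ∃ M : Ideal R, IsGradedMaximal 𝒜 M ∧ IsGradedPrime 𝒜 M ∧ I ≤ M := by
  obtain ⟨P, hprime, hIP, hPS, hmax⟩ := exists_gradedPrime 𝒜 {1} rfl
    (by rintro s rfl t rfl; simp) I hI
    (by rintro s rfl; exact (Ideal.ne_top_iff_one I).1 hne)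
  refine ⟨P, ⟨hprime.1, hprime.2.1, fun J hJ hPJ hJne => hmax J hJ hPJ ?_⟩, hprime, hIP⟩
  rintro s rfl
  exact (Ideal.ne_top_iff_one J).1 hJne

/-- Graded maximal ideals are graded prime. -/
theorem IsGradedMaximal.isGradedPrime {M : Ideal R} (hM : IsGradedMaximal 𝒜 M) :
    IsGradedPrime 𝒜 M := by
  obtain ⟨hhom, hne, hmax⟩ := hM
  refine ⟨hhom, hne, fun a b ha hb hab => ?_⟩
  by_contra hcon
  push_neg at hcon
  obtain ⟨haM, hbM⟩ := hcon
  have hJ : (M ⊔ Ideal.span {a}).IsHomogeneous 𝒜 :=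
    hhom.sup (Ideal.homogeneous_span 𝒜 _ (by rintro y (rfl : y = a); exact ha))
  have htop : M ⊔ Ideal.span {a} = ⊤ := by
    by_contra hne'
    exact haM ((hmax _ hJ le_sup_left hne') ▸ Ideal.mem_sup_right (Ideal.subset_span rfl))
  have h1 : (1 : R) ∈ M ⊔ Ideal.span {a} := htop ▸ Submodule.mem_top
  obtain ⟨p, hp, q, hq, hpq⟩ := Submodule.mem_sup.1 h1
  obtain ⟨r, hr⟩ := Ideal.mem_span_singleton'.1 hq
  have : b = p * b + r * (a * b) := by
    have h1' : (1 : R) = p + r * a := by rw [← hpq, hr]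
    calc b = (p + r * a) * b := by rw [← h1', one_mul]
    _ = p * b + r * (a * b) := by ring
  exact hbM (this ▸ M.add_mem (M.mul_mem_right _ hp) (M.mul_mem_left _ hab))

theorem gspec_basis : TopologicalSpace.IsTopologicalBasis
    { U | ∃ r : R, SetLike.IsHomogeneousElem 𝒜 r ∧ U = { P : GSpec 𝒜 | r ∉ P.1 } } := by
  refine ⟨?_, ?_, rfl⟩
  · rintro _ ⟨r, hr, rfl⟩ _ ⟨s, hs, rfl⟩ P ⟨hrP, hsP⟩
    refine ⟨_, ⟨r * s, SetLike.IsHomogeneousElem.mul hr hs, rfl⟩, ?_, ?_⟩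
    · intro h
      rcases P.2.2.2 r s hr hs h with h' | h'
      exacts [hrP h', hsP h']
    · intro Q hQ
      exact ⟨fun h => hQ (Q.1.mul_mem_right s h), fun h => hQ (Q.1.mul_mem_left r h)⟩
  · refine Set.eq_univ_of_forall fun P => ?_
    exact ⟨_, ⟨1, SetLike.isHomogeneousElem_one 𝒜, rfl⟩, (Ideal.ne_top_iff_one P.1).1 P.2.2.1⟩

theorem exists_basic {U : Set (GSpec 𝒜)} (hU : IsOpen U) {P : GSpec 𝒜} (hP : P ∈ U) :
    ∃ r : R, SetLike.IsHomogeneousElem 𝒜 r ∧ r ∉ P.1 ∧ { Q : GSpec 𝒜 | r ∉ Q.1 } ⊆ U := by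
  obtain ⟨V, ⟨r, hr, rfl⟩, hPV, hVU⟩ := (gspec_basis 𝒜).exists_subset_of_mem_open hP hU
  exact ⟨r, hr, hPV, hVU⟩

theorem isOpen_basic {r : R} (hr : SetLike.IsHomogeneousElem 𝒜 r) :
    IsOpen { P : GSpec 𝒜 | r ∉ P.1 } :=
  (gspec_basis 𝒜).isOpen ⟨r, hr, rfl⟩

/-- Closed sets are stable under specialization. -/
theorem mem_closed_of_le {F : Set (GSpec 𝒜)} (hF : IsClosed F) {P Q : GSpec 𝒜}
    (hP : P ∈ F) (hle : P.1 ≤ Q.1) : Q ∈ F := by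
  by_contra hQ
  obtain ⟨r, hr, hrQ, hsub⟩ := exists_basic 𝒜 hF.isOpen_compl hQ
  exact hsub (fun h => hrQ (hle h)) hP

/-- A common homogeneous annihilating witness for finitely many elements. -/
theorem kill_all (P : GSpec 𝒜) (S : Finset R)
    (h : ∀ s ∈ S, ∃ a : R, SetLike.IsHomogeneousElem 𝒜 a ∧ a ∉ P.1 ∧ s * a = 0) :
    ∃ a : R, SetLike.IsHomogeneousElem 𝒜 a ∧ a ∉ P.1 ∧ ∀ s ∈ S, s * a = 0 := by
  classical
  induction S using Finset.induction_on with
  | empty => exact ⟨1, SetLike.isHomogeneousElem_one 𝒜, (Ideal.ne_top_iff_one P.1).1 P.2.2.1,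
      fun s hs => absurd hs (Finset.notMem_empty s)⟩
  | @insert x S hx ih =>
    obtain ⟨a, ha, haP, hkill⟩ := ih fun s hs => h s (Finset.mem_insert_of_mem hs)
    obtain ⟨a', ha', ha'P, hkill'⟩ := h x (Finset.mem_insert_self x S)
    refine ⟨a * a', SetLike.IsHomogeneousElem.mul ha ha', ?_, ?_⟩
    · intro hmem
      rcases P.2.2.2 a a' ha ha' hmem with h' | h'
      exacts [haP h', ha'P h']
    · intro s hs
      rcases Finset.mem_insert.1 hs with rfl | hs'
      · rw [mul_comm a a', ← mul_assoc, hkill', zero_mul]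
      · rw [← mul_assoc, hkill s hs', zero_mul]

/-- Finite subcover of a closed set from a cover by basic opens. -/
theorem finite_subcover {F : Set (GSpec 𝒜)} (hF : IsClosed F) (S : Set R)
    (hhom : ∀ c ∈ S, SetLike.IsHomogeneousElem 𝒜 c) (hcov : ∀ P ∈ F, ∃ c ∈ S, c ∉ P.1) :
    ∃ S₀ : Finset R, (↑S₀ : Set R) ⊆ S ∧ ∀ P ∈ F, ∃ c ∈ S₀, c ∉ P.1 := by
  classical
  set T : Set R := { r | SetLike.IsHomogeneousElem 𝒜 r ∧ ∀ Q : GSpec 𝒜, r ∉ Q.1 → Q ∉ F } with hT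
  have h1 : (1 : R) ∈ Ideal.span (S ∪ T) := by
    by_contra h1
    have hne : Ideal.span (S ∪ T) ≠ ⊤ := fun h => h1 (h ▸ Submodule.mem_top)
    have hhomJ : (Ideal.span (S ∪ T)).IsHomogeneous 𝒜 :=
      Ideal.homogeneous_span 𝒜 _ (by rintro x (hx | hx); exacts [hhom x hx, hx.1])
    obtain ⟨M, hMmax, hMprime, hJM⟩ := exists_gradedMaximal 𝒜 _ hhomJ hne
    set m : GSpec 𝒜 := ⟨M, hMprime⟩ with hm
    by_cases hmF : m ∈ F
    · obtain ⟨c, hcS, hcM⟩ := hcov m hmF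
      exact hcM (hJM (Ideal.subset_span (Or.inl hcS)))
    · obtain ⟨r, hr, hrM, hsub⟩ := exists_basic 𝒜 hF.isOpen_compl hmF
      have hrT : r ∈ T := ⟨hr, fun Q hQ => hsub hQ⟩
      exact hrM (hJM (Ideal.subset_span (Or.inr hrT)))
  obtain ⟨c, hsupp, hsum⟩ := Submodule.mem_span_set.1 h1
  refine ⟨c.support.filter (· ∈ S), by intro z hz; exact (Finset.mem_filter.1 hz).2, ?_⟩
  intro P hP
  by_contra hcon
  push_neg at hcon
  have hall : ∀ z ∈ c.support, z ∈ P.1.1 := by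
    intro z hz
    rcases hsupp hz with hzS | hzT
    · exact hcon z (Finset.mem_filter.2 ⟨hz, hzS⟩)
    · by_contra hzP
      exact hzT.2 P hzP hP
  have : (1 : R) ∈ P.1 := by
    rw [← hsum]
    exact Ideal.sum_mem _ fun z hz => by
      simpa [smul_eq_mul] using P.1.mul_mem_left (c z) (hall z hz)
  exact P.2.2.1 ((Ideal.eq_top_iff_one P.1).2 this)

end Aux

section Aux2
variable {G : Type*} [AddGroup G] [DecidableEq G] {R : Type*} [CommRing R]
variable (𝒜 : G → AddSubgroup R) [GradedRing 𝒜]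

/-- In a Gelfand graded ring, distinct graded maximal ideals are separated by
homogeneous elements with zero product. -/
theorem sep_max (hGel : IsGelfandGraded 𝒜) {M N : Ideal R}
    (hM : IsGradedMaximal 𝒜 M) (hN : IsGradedMaximal 𝒜 N) (hMN : M ≠ N) :
    ∃ a b : R, SetLike.IsHomogeneousElem 𝒜 a ∧ SetLike.IsHomogeneousElem 𝒜 b ∧
      a ∉ M ∧ b ∉ N ∧ a * b = 0 := by
  by_contra hcon
  push_neg at hcon
  set S : Set R := { x | ∃ a b : R, SetLike.IsHomogeneousElem 𝒜 a ∧ SetLike.IsHomogeneousElem 𝒜 b ∧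
    a ∉ M ∧ b ∉ N ∧ x = a * b } with hS
  have hMp := hM.isGradedPrime 𝒜
  have hNp := hN.isGradedPrime 𝒜
  have h1M : (1 : R) ∉ M := (Ideal.ne_top_iff_one M).1 hM.2.1
  have h1N : (1 : R) ∉ N := (Ideal.ne_top_iff_one N).1 hN.2.1
  have hS1 : (1 : R) ∈ S :=
    ⟨1, 1, SetLike.isHomogeneousElem_one 𝒜, SetLike.isHomogeneousElem_one 𝒜, h1M, h1N, (one_mul 1).symm⟩
  have hSmul : ∀ s ∈ S, ∀ t ∈ S, s * t ∈ S := by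
    rintro _ ⟨a, b, ha, hb, haM, hbN, rfl⟩ _ ⟨a', b', ha', hb', ha'M, hb'N, rfl⟩
    refine ⟨a * a', b * b', SetLike.IsHomogeneousElem.mul ha ha', SetLike.IsHomogeneousElem.mul hb hb',
      ?_, ?_, by ring⟩
    · intro h
      rcases hMp.2.2 a a' ha ha' h with h' | h'
      exacts [haM h', ha'M h']
    · intro h
      rcases hNp.2.2 b b' hb hb' h with h' | h'
      exacts [hbN h', hb'N h']
  have hS0 : ∀ s ∈ S, s ∉ (⊥ : Ideal R) := by
    rintro _ ⟨a, b, ha, hb, haM, hbN, rfl⟩ h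
    exact hcon a b ha hb haM hbN (Ideal.mem_bot.1 h)
  obtain ⟨P, hPprime, _, hPS, _⟩ :=
    exists_gradedPrime 𝒜 S hS1 hSmul ⊥ (Ideal.IsHomogeneous.bot 𝒜) hS0
  have hPM : P ≤ M := by
    refine le_of_homog_le 𝒜 hPprime.1 fun x hx hxP => ?_
    by_contra hxM
    exact hPS x ⟨x, 1, hx, SetLike.isHomogeneousElem_one 𝒜, hxM, h1N, (mul_one x).symm⟩ hxP
  have hPN : P ≤ N := by
    refine le_of_homog_le 𝒜 hPprime.1 fun x hx hxP => ?_
    by_contra hxN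
    exact hPS x ⟨1, x, SetLike.isHomogeneousElem_one 𝒜, hx, h1M, hxN, (one_mul x).symm⟩ hxP
  obtain ⟨M', -, huniq⟩ := hGel P hPprime
  exact hMN ((huniq M ⟨hM, hPM⟩).trans (huniq N ⟨hN, hPN⟩).symm)

/-- Key covering lemma: for disjoint closed `F, F'` there are finitely many homogeneous
elements, each locally zero on `F`, whose basic opens cover `F'`. -/
theorem locallyZero_cover (hGel : IsGelfandGraded 𝒜) {F F' : Set (GSpec 𝒜)}
    (hF : IsClosed F) (hF' : IsClosed F') (hd : Disjoint F F') :
    ∃ S₁ : Finset R,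
      (∀ s ∈ S₁, SetLike.IsHomogeneousElem 𝒜 s ∧
        ∀ P ∈ F, ∃ a : R, SetLike.IsHomogeneousElem 𝒜 a ∧ a ∉ P.1 ∧ s * a = 0) ∧
      ∀ Q ∈ F', ∃ s ∈ S₁, s ∉ Q.1 := by
  classical
  set S' : Set R := { s | SetLike.IsHomogeneousElem 𝒜 s ∧
    ∀ P ∈ F, ∃ a : R, SetLike.IsHomogeneousElem 𝒜 a ∧ a ∉ P.1 ∧ s * a = 0 } with hS'
  have hcov : ∀ Q ∈ F', ∃ s ∈ S', s ∉ Q.1 := by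
    intro Q hQ
    -- the unique graded maximal ideal above Q
    obtain ⟨MQ, ⟨hMQmax, hQMQ⟩, -⟩ := hGel Q.1 Q.2
    have hMQprime := hMQmax.isGradedPrime 𝒜
    set mQ : GSpec 𝒜 := ⟨MQ, hMQprime⟩ with hmQ
    have hmQF' : mQ ∈ F' := mem_closed_of_le 𝒜 hF' hQ hQMQ
    -- cover F by basic opens coming from separation with MQ
    set SQ : Set R := { a | SetLike.IsHomogeneousElem 𝒜 a ∧
      ∃ b : R, SetLike.IsHomogeneousElem 𝒜 b ∧ b ∉ MQ ∧ a * b = 0 } with hSQ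
    have hcovF : ∀ P ∈ F, ∃ c ∈ SQ, c ∉ P.1 := by
      intro P hP
      obtain ⟨MP, ⟨hMPmax, hPMP⟩, -⟩ := hGel P.1 P.2
      have hMPprime := hMPmax.isGradedPrime 𝒜
      have hmPF : (⟨MP, hMPprime⟩ : GSpec 𝒜) ∈ F := mem_closed_of_le 𝒜 hF hP hPMP
      have hne : MP ≠ MQ := by
        intro h
        have hmem : mQ ∈ F := by
          rw [← show (⟨MP, hMPprime⟩ : GSpec 𝒜) = mQ from Subtype.ext h]
          exact hmPF
        exact Set.disjoint_left.1 hd hmem hmQF'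
      obtain ⟨a, b, ha, hb, haMP, hbMQ, hab⟩ := sep_max 𝒜 hGel hMPmax hMQmax hne
      exact ⟨a, ⟨ha, b, hb, hbMQ, hab⟩, fun h => haMP (hPMP h)⟩
    obtain ⟨S₀, hS₀sub, hS₀cov⟩ := finite_subcover 𝒜 hF SQ (fun c hc => hc.1) hcovF
    have hkill : ∀ s ∈ S₀, ∃ b : R, SetLike.IsHomogeneousElem 𝒜 b ∧ b ∉ mQ.1 ∧ s * b = 0 := by
      intro s hs
      obtain ⟨-, b, hb, hbMQ, hsb⟩ := hS₀sub hs
      exact ⟨b, hb, hbMQ, hsb⟩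
    obtain ⟨b, hb, hbMQ, hball⟩ := kill_all 𝒜 mQ S₀ hkill
    refine ⟨b, ⟨hb, ?_⟩, fun h => hbMQ (hQMQ h)⟩
    intro P hP
    obtain ⟨c, hcS₀, hcP⟩ := hS₀cov P hP
    exact ⟨c, (hS₀sub hcS₀).1, hcP, by rw [mul_comm]; exact hball c hcS₀⟩
  obtain ⟨S₁, hS₁sub, hS₁cov⟩ := finite_subcover 𝒜 hF' S' (fun c hc => hc.1) hcov
  exact ⟨S₁, fun s hs => hS₁sub hs, hS₁cov⟩

end Aux2

section Aux3
variable {G : Type*} [AddGroup G] [DecidableEq G] {R : Type*} [CommRing R]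
variable (𝒜 : G → AddSubgroup R) [GradedRing 𝒜]

/-- The point of `GSpec` determined by a graded maximal ideal is closed. -/
theorem isClosed_singleton_max {M : Ideal R} (hM : IsGradedMaximal 𝒜 M)
    (hMp : IsGradedPrime 𝒜 M) : IsClosed ({(⟨M, hMp⟩ : GSpec 𝒜)} : Set (GSpec 𝒜)) := by
  have : ({(⟨M, hMp⟩ : GSpec 𝒜)} : Set (GSpec 𝒜))ᶜ
      = ⋃ r ∈ { r : R | SetLike.IsHomogeneousElem 𝒜 r ∧ r ∈ M }, { Q : GSpec 𝒜 | r ∉ Q.1 } := by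
    ext Q
    simp only [Set.mem_compl_iff, Set.mem_singleton_iff, Set.mem_iUnion, Set.mem_setOf_eq]
    constructor
    · intro hQ
      by_contra hcon
      push_neg at hcon
      have hle : M ≤ Q.1 := le_of_homog_le 𝒜 hM.1 fun x hx hxM => by
        by_contra hxQ
        exact hxQ (hcon x ⟨hx, hxM⟩)
      exact hQ (Subtype.ext (hM.2.2 Q.1 Q.2.1 hle Q.2.2.1))
    · rintro ⟨r, ⟨hr, hrM⟩, hrQ⟩ hQ
      rw [hQ] at hrQ
      exact hrQ hrM
  rw [← isOpen_compl_iff, this]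
  exact isOpen_biUnion fun r hr => isOpen_basic 𝒜 hr.1
end Aux3

section Statements

variable {G : Type*} [AddGroup G] [DecidableEq G] {R : Type*} [CommRing R]
variable (𝒜 : G → AddSubgroup R) [GradedRing 𝒜]

theorem stmt_9 : IsGelfandGraded 𝒜 ↔
    ∀ F F' : Set (GSpec 𝒜), IsClosed F → IsClosed F' → Disjoint F F' →
      ∃ r : R, (∀ P ∈ F, ∃ a : R, SetLike.IsHomogeneousElem 𝒜 a ∧ a ∉ P.1 ∧ r * a = 0) ∧
        ∀ P ∈ F', ∃ b : R, SetLike.IsHomogeneousElem 𝒜 b ∧ b ∉ P.1 ∧ (r - 1) * b = 0 := by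
  constructor
  · -- Gelfand ⇒ separation
    intro hGel F F' hF hF' hd
    classical
    obtain ⟨S₁, hS₁loc, hS₁cov⟩ := locallyZero_cover 𝒜 hGel hF hF' hd
    -- F'' : the closed set where all elements of S₁ vanish
    set F'' : Set (GSpec 𝒜) := { P | ∀ s ∈ S₁, s ∈ P.1 } with hF''def
    have hF''closed : IsClosed F'' := by
      have : F''ᶜ = ⋃ s ∈ S₁, { P : GSpec 𝒜 | s ∉ P.1 } := by
        ext P
        simp [hF''def]
      rw [← isOpen_compl_iff, this]
      exact isOpen_biUnion fun s hs => isOpen_basic 𝒜 (hS₁loc s hs).1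
    have hFF'' : F ⊆ F'' := by
      intro P hP s hs
      obtain ⟨a, ha, haP, hsa⟩ := (hS₁loc s hs).2 P hP
      rcases P.2.2.2 s a (hS₁loc s hs).1 ha (by rw [hsa]; exact P.1.zero_mem) with h | h
      exacts [h, absurd h haP]
    have hd' : Disjoint F' F'' := by
      rw [Set.disjoint_left]
      intro Q hQ hQ''
      obtain ⟨s, hs, hsQ⟩ := hS₁cov Q hQ
      exact hsQ (hQ'' s hs)
    obtain ⟨T₁, hT₁loc, hT₁cov⟩ := locallyZero_cover 𝒜 hGel hF' hF''closed hd'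
    -- span (S₁ ∪ T₁) = ⊤
    have h1 : (1 : R) ∈ Ideal.span ((↑S₁ : Set R) ∪ (↑T₁ : Set R)) := by
      by_contra h1
      have hne : Ideal.span ((↑S₁ : Set R) ∪ ↑T₁) ≠ ⊤ := fun h => h1 (h ▸ Submodule.mem_top)
      have hhomJ : (Ideal.span ((↑S₁ : Set R) ∪ ↑T₁)).IsHomogeneous 𝒜 :=
        Ideal.homogeneous_span 𝒜 _ (by
          rintro x (hx | hx)
          exacts [(hS₁loc x hx).1, (hT₁loc x hx).1])
      obtain ⟨M, hMmax, hMprime, hJM⟩ := exists_gradedMaximal 𝒜 _ hhomJ hne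
      have hmF'' : (⟨M, hMprime⟩ : GSpec 𝒜) ∈ F'' :=
        fun s hs => hJM (Ideal.subset_span (Or.inl hs))
      obtain ⟨t, ht, htM⟩ := hT₁cov _ hmF''
      exact htM (hJM (Ideal.subset_span (Or.inr ht)))
    rw [Ideal.span_union] at h1
    obtain ⟨y, hy, x, hx, hyx⟩ := Submodule.mem_sup.1 h1
    refine ⟨y, ?_, ?_⟩
    · intro P hP
      obtain ⟨a, ha, haP, hall⟩ := kill_all 𝒜 P S₁ fun s hs => (hS₁loc s hs).2 P hP
      refine ⟨a, ha, haP, ?_⟩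
      have : Ideal.span (↑S₁ : Set R) ≤ LinearMap.ker (LinearMap.mulRight R a) := by
        rw [Ideal.span_le]
        intro s hs
        exact LinearMap.mem_ker.2 (hall s hs)
      simpa [LinearMap.mulRight_apply] using LinearMap.mem_ker.1 (this hy)
    · intro Q hQ
      obtain ⟨b, hb, hbQ, hall⟩ := kill_all 𝒜 Q T₁ fun t ht => (hT₁loc t ht).2 Q hQ
      refine ⟨b, hb, hbQ, ?_⟩
      have hxb : x * b = 0 := by
        have : Ideal.span (↑T₁ : Set R) ≤ LinearMap.ker (LinearMap.mulRight R b) := by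
          rw [Ideal.span_le]
          intro t ht
          exact LinearMap.mem_ker.2 (hall t ht)
        simpa [LinearMap.mulRight_apply] using LinearMap.mem_ker.1 (this hx)
      have hy1 : y - 1 = -x := by rw [← hyx]; ring
      rw [hy1, neg_mul, hxb, neg_zero]
  · -- separation ⇒ Gelfand
    intro hsep P hP
    obtain ⟨M, hMmax, hMprime, hPM⟩ := exists_gradedMaximal 𝒜 P hP.1 hP.2.1
    refine ⟨M, ⟨hMmax, hPM⟩, ?_⟩
    rintro N ⟨hNmax, hPN⟩
    by_contra hne
    have hNprime := hNmax.isGradedPrime 𝒜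
    have hdisj : Disjoint ({(⟨N, hNprime⟩ : GSpec 𝒜)} : Set (GSpec 𝒜))
        ({(⟨M, hMprime⟩ : GSpec 𝒜)} : Set (GSpec 𝒜)) := by
      refine (Set.disjoint_singleton (a := (⟨N, hNprime⟩ : GSpec 𝒜)) (b := ⟨M, hMprime⟩)).2 ?_
      exact fun h => hne (congrArg Subtype.val h)
    obtain ⟨r, hr0, hr1⟩ := hsep _ _ (isClosed_singleton_max 𝒜 hNmax hNprime)
      (isClosed_singleton_max 𝒜 hMmax hMprime) hdisj
    obtain ⟨a, ha, haN, hra⟩ := hr0 _ rfl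
    obtain ⟨b, hb, hbM, hrb⟩ := hr1 _ rfl
    have hab : a * b = 0 := by
      have h1 : r * (a * b) = 0 := by rw [← mul_assoc, hra, zero_mul]
      have h2 : (r - 1) * (a * b) = 0 := by
        calc (r - 1) * (a * b) = ((r - 1) * b) * a := by ring
        _ = 0 := by rw [hrb, zero_mul]
      calc a * b = r * (a * b) - (r - 1) * (a * b) := by ring
      _ = 0 := by rw [h1, h2, sub_zero]
    rcases hP.2.2 a b ha hb (hab ▸ P.zero_mem) with h | h
    exacts [haN (hPN h), hbM (hPM h)]

end Statements
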